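/- Let r be a natural number with r ≥ 1, let l₁, …, l_r ∈ ℝ, and let A_{i,j} (for 1 ≤ i < j ≤ r) be antipinco 2×2 real matrices. Set B = T(l₁,…,l_r) + R(A_{i,j}) and suppose B ≠ 0. Then there exists s ∈ ℝ such that det(J̄_{2r} + s·B) = 0, i.e. the matrix J̄_{2r} + s·B is singular. -/

import Mathlib

open Matrix

/-- The 2×2 matrix `J = [[0,1],[-1,0]]`. -/
def Jmat : Matrix (Fin 2) (Fin 2) ℝ := !![0, 1; -1, 0]

/-- The `2r × 2r` block-diagonal matrix with `r` diagonal blocks equal to `J`. -/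
def Jbar (r : ℕ) : Matrix (Fin (2 * r)) (Fin (2 * r)) ℝ :=
  Matrix.of fun i j =>
    if (i : ℕ) / 2 = (j : ℕ) / 2 then
      Jmat ⟨(i : ℕ) % 2, by omega⟩ ⟨(j : ℕ) % 2, by omega⟩
    else 0

/-- Given 2×2 matrices `A i j` (used for `i < j`), the antisymmetric `2r × 2r` block matrix
whose `(i,j)`-th 2×2 block is `A i j` for `i < j`, `-(A j i)ᵀ` for `i > j`, and `0` for
`i = j`. -/
def Rblock {r : ℕ} (A : Fin r → Fin r → Matrix (Fin 2) (Fin 2) ℝ) :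
    Matrix (Fin (2 * r)) (Fin (2 * r)) ℝ :=
  Matrix.of fun x y =>
    if h : (x : ℕ) / 2 < (y : ℕ) / 2 then
      A ⟨(x : ℕ) / 2, by have := y.2; omega⟩ ⟨(y : ℕ) / 2, by have := y.2; omega⟩
        ⟨(x : ℕ) % 2, by omega⟩ ⟨(y : ℕ) % 2, by omega⟩
    else if h' : (y : ℕ) / 2 < (x : ℕ) / 2 then
      - A ⟨(y : ℕ) / 2, by have := x.2; omega⟩ ⟨(x : ℕ) / 2, by have := x.2; omega⟩
          ⟨(y : ℕ) % 2, by omega⟩ ⟨(x : ℕ) % 2, by omega⟩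
    else 0

/-- A 2×2 real matrix is *antipinco* if it has the form `[[a,b],[-b,a]]`. -/
def IsAntipinco (P : Matrix (Fin 2) (Fin 2) ℝ) : Prop :=
  ∃ a b : ℝ, P = !![a, b; -b, a]

/-- The `2r × 2r` block-diagonal matrix with diagonal blocks `l₁ J, …, l_r J`. -/
def Tmat {r : ℕ} (l : Fin r → ℝ) : Matrix (Fin (2 * r)) (Fin (2 * r)) ℝ :=
  Matrix.of fun i j =>
    if (i : ℕ) / 2 = (j : ℕ) / 2 then
      l ⟨(i : ℕ) / 2, by have := i.2; omega⟩ *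
        Jmat ⟨(i : ℕ) % 2, by omega⟩ ⟨(j : ℕ) % 2, by omega⟩
    else 0

/-- A nonzero real symmetric matrix has a nonzero eigenvalue, hence `1 - s • M` is
singular for some `s`. -/
lemma exists_det_eq_zero {n : ℕ} (M : Matrix (Fin n) (Fin n) ℝ) (hsym : M.IsSymm) (hM : M ≠ 0) :
    ∃ s : ℝ, (1 - s • M).det = 0 := by
  have hherm : M.IsHermitian := by
    rwa [Matrix.IsHermitian, conjTranspose_eq_transpose_of_trivial]
  obtain ⟨i, hi⟩ : ∃ i, hherm.eigenvalues i ≠ 0 := by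
    by_contra h
    push_neg at h
    apply hM
    have := hherm.spectral_theorem
    rw [this]
    have : Matrix.diagonal (RCLike.ofReal ∘ hherm.eigenvalues) = (0 : Matrix (Fin n) (Fin n) ℝ) := by
      ext a b
      by_cases hab : a = b <;> simp [Matrix.diagonal, hab, h]
    rw [this, map_zero]
  refine ⟨(hherm.eigenvalues i)⁻¹, ?_⟩
  set U := (hherm.eigenvectorUnitary : Matrix (Fin n) (Fin n) ℝ)
  set s := (hherm.eigenvalues i)⁻¹
  have hU : U * star U = 1 := (Matrix.mem_unitaryGroup_iff).mp hherm.eigenvectorUnitary.2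
  have key : (1 : Matrix (Fin n) (Fin n) ℝ) - s • M
      = U * (Matrix.diagonal (fun j => 1 - s * hherm.eigenvalues j)) * star U := by
    have : Matrix.diagonal (fun j => 1 - s * hherm.eigenvalues j)
        = 1 - s • Matrix.diagonal (RCLike.ofReal ∘ hherm.eigenvalues) := by
      ext a b
      by_cases hab : a = b <;> simp [Matrix.diagonal, Matrix.one_apply, hab]
    rw [this, mul_sub, sub_mul, mul_one, hU, Matrix.mul_smul, Matrix.smul_mul]
    have hsp := hherm.spectral_theorem
    rw [Unitary.conjStarAlgAut_apply] at hsp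
    rw [← hsp]
  rw [key, Matrix.det_mul, Matrix.det_mul, Matrix.det_diagonal]
  have : (1 : ℝ) - s * hherm.eigenvalues i = 0 := by
    simp [s, inv_mul_cancel₀ hi]
  rw [mul_comm (Matrix.det U), mul_assoc, ← Matrix.det_mul, hU]
  rw [Matrix.det_one, mul_one]; exact Finset.prod_eq_zero (Finset.mem_univ i) this

/-- The partner index within the same 2-block. -/
def pr {r : ℕ} (i : Fin (2 * r)) : Fin (2 * r) :=
  ⟨2 * ((i : ℕ) / 2) + (1 - (i : ℕ) % 2), by have := i.2; omega⟩

lemma Jmat_apply (m n : ℕ) (hm : m < 2) (hn : n < 2) :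
    Jmat ⟨m, hm⟩ ⟨n, hn⟩ = if m = n then 0 else if m = 0 then 1 else -1 := by
  interval_cases m <;> interval_cases n <;> simp [Jmat]

lemma anti_apply (a b : ℝ) (m n : ℕ) (hm : m < 2) (hn : n < 2) :
    !![a, b; -b, a] ⟨m, hm⟩ ⟨n, hn⟩ = if m = n then a else if m = 0 then b else -b := by
  interval_cases m <;> interval_cases n <;> simp

lemma pr_div {r : ℕ} (i : Fin (2 * r)) : ((pr i : Fin (2 * r)) : ℕ) / 2 = (i : ℕ) / 2 := by
  simp only [pr]; omega

lemma pr_mod {r : ℕ} (i : Fin (2 * r)) : ((pr i : Fin (2 * r)) : ℕ) % 2 = 1 - (i : ℕ) % 2 := by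
  simp only [pr]; omega

lemma Jbar_mul_apply {r : ℕ} (B : Matrix (Fin (2 * r)) (Fin (2 * r)) ℝ) (i j : Fin (2 * r)) :
    (Jbar r * B) i j = (if (i : ℕ) % 2 = 0 then 1 else -1) * B (pr i) j := by
  rw [Matrix.mul_apply]
  rw [Finset.sum_eq_single (pr i)]
  · congr 1
    show Jbar r i (pr i) = _
    have h1 := pr_div i
    have h2 := pr_mod i
    simp only [Jbar, Matrix.of_apply, h1, if_pos rfl]
    rw [Jmat_apply, h2]
    rcases Nat.mod_two_eq_zero_or_one (i : ℕ) with h | h <;> simp [h]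
  · intro b _ hb
    have hzero : Jbar r i b = 0 := by
      simp only [Jbar, Matrix.of_apply]
      split_ifs with h
      · have hbi : (b : ℕ) = (i : ℕ) := by
          have hne : (b : ℕ) ≠ ((pr i : Fin (2 * r)) : ℕ) := fun hh => hb (Fin.ext hh)
          simp only [pr] at hne
          omega
        rw [Jmat_apply, hbi, if_pos rfl]
      · rfl
    rw [hzero, zero_mul]
  · intro h; exact absurd (Finset.mem_univ _) h

lemma Jbar_sq (r : ℕ) : Jbar r * Jbar r = -1 := by
  ext i j
  rw [Jbar_mul_apply]
  have hdi := pr_div i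
  have hmi := pr_mod i
  simp only [Jbar, Matrix.of_apply, hdi, hmi, Matrix.neg_apply, Matrix.one_apply]
  by_cases hd : (i : ℕ) / 2 = (j : ℕ) / 2
  · by_cases hij : i = j
    · subst hij
      rcases Nat.mod_two_eq_zero_or_one (i : ℕ) with h1 | h1 <;>
        simp [h1, Jmat_apply, hd, Jmat]
    · have hv : (i : ℕ) ≠ (j : ℕ) := fun h => hij (Fin.ext h)
      have hm : 1 - (i : ℕ) % 2 = (j : ℕ) % 2 := by omega
      simp [hd, hij, Jmat_apply, hm]
  · have hij : i ≠ j := fun h => hd (by rw [h])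
    simp [hd, hij]

lemma key_symm {r : ℕ} (l : Fin r → ℝ) (A : Fin r → Fin r → Matrix (Fin 2) (Fin 2) ℝ)
    (hA : ∀ i j : Fin r, i < j → IsAntipinco (A i j)) :
    (Jbar r * (Tmat l + Rblock A)).IsSymm := by
  have hr2 : ∀ i : Fin (2 * r), (i : ℕ) / 2 < r := fun i => by have := i.2; omega
  ext i j
  rw [Matrix.transpose_apply, Jbar_mul_apply, Jbar_mul_apply, Matrix.add_apply, Matrix.add_apply]
  have hdj := pr_div j
  have hmj := pr_mod j
  have hdi := pr_div i
  have hmi := pr_mod i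
  simp only [Tmat, Rblock, Matrix.of_apply, hdj, hmj, hdi, hmi]
  rcases lt_trichotomy ((i : ℕ) / 2) ((j : ℕ) / 2) with hlt | heq | hgt
  · have c1 : ¬((j : ℕ) / 2 = (i : ℕ) / 2) := by omega
    have c2 : ¬((i : ℕ) / 2 = (j : ℕ) / 2) := by omega
    have c3 : ¬((j : ℕ) / 2 < (i : ℕ) / 2) := by omega
    obtain ⟨a, b, hab⟩ := hA ⟨(i : ℕ) / 2, hr2 i⟩ ⟨(j : ℕ) / 2, hr2 j⟩ hlt
    rcases Nat.mod_two_eq_zero_or_one (i : ℕ) with h1 | h1 <;>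
      rcases Nat.mod_two_eq_zero_or_one (j : ℕ) with h2 | h2 <;>
        simp [c1, c2, c3, hlt, hab, h1, h2, anti_apply]
  · have c3 : ¬((i : ℕ) / 2 < (j : ℕ) / 2) := by omega
    have c4 : ¬((j : ℕ) / 2 < (i : ℕ) / 2) := by omega
    have hji : (j : ℕ) / 2 = (i : ℕ) / 2 := heq.symm
    rcases Nat.mod_two_eq_zero_or_one (i : ℕ) with h1 | h1 <;>
      rcases Nat.mod_two_eq_zero_or_one (j : ℕ) with h2 | h2 <;>
        simp [c3, c4, hji, h1, h2, Jmat_apply, Jmat]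
  · have c1 : ¬((j : ℕ) / 2 = (i : ℕ) / 2) := by omega
    have c2 : ¬((i : ℕ) / 2 = (j : ℕ) / 2) := by omega
    have c3 : ¬((i : ℕ) / 2 < (j : ℕ) / 2) := by omega
    obtain ⟨a, b, hab⟩ := hA ⟨(j : ℕ) / 2, hr2 j⟩ ⟨(i : ℕ) / 2, hr2 i⟩ hgt
    rcases Nat.mod_two_eq_zero_or_one (i : ℕ) with h1 | h1 <;>
      rcases Nat.mod_two_eq_zero_or_one (j : ℕ) with h2 | h2 <;>
        simp [c1, c2, c3, hgt, hab, h1, h2, anti_apply]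

/-- if the `A i j` (for `i < j`) are antipinco and
`B = T(l₁,…,l_r) + R(A)` is nonzero, then `J̄₂ᵣ + s•B` is singular for some `s ∈ ℝ`. -/
theorem stmt_13 (r : ℕ) (hr : 1 ≤ r) (l : Fin r → ℝ)
    (A : Fin r → Fin r → Matrix (Fin 2) (Fin 2) ℝ)
    (hA : ∀ i j : Fin r, i < j → IsAntipinco (A i j))
    (hB : Tmat l + Rblock A ≠ 0) :
    ∃ s : ℝ, (Jbar r + s • (Tmat l + Rblock A)).det = 0 := by
  set B := Tmat l + Rblock A with hBdef
  set M := Jbar r * B with hMdef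
  have hMne : M ≠ 0 := by
    intro h
    apply hB
    have h2 : Jbar r * M = 0 := by rw [h, mul_zero]
    rw [hMdef, ← mul_assoc, Jbar_sq, neg_one_mul, neg_eq_zero] at h2
    exact h2
  obtain ⟨s, hs⟩ := exists_det_eq_zero M (key_symm l A hA) hMne
  refine ⟨s, ?_⟩
  have hfac : Jbar r + s • B = Jbar r * (1 - s • M) := by
    rw [mul_sub, mul_one, Matrix.mul_smul, hMdef, ← mul_assoc, Jbar_sq, neg_one_mul,
      smul_neg, sub_neg_eq_add]
  rw [hfac, Matrix.det_mul, hs, mul_zero]
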